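/- Lyapunov decrease for αPGD: let f : ℝⁿ → ℝ be convex and differentiable with ∇f L_f-Lipschitz, let φ : ℝⁿ → ℝ be M-weakly convex with M ≥ 0, let α ∈ (0,1) and τ > 0 satisfy τ·α·L_f < 1, and set F = f + φ. Let (q_k), (x_k), (y_k) be sequences with, for all k ≥ 0: q_{k+1} = (1−α)y_k + α·x_k; x_{k+1} a minimizer over ℝⁿ of u ↦ φ(u) + (1/(2τ))‖u − (x_k − τ·∇f(q_{k+1}))‖²; y_{k+1} = (1−α)y_k + α·x_{k+1}. Then for all k ≥ 1, F(y_k) − F(y_{k+1}) ≥ −δ·‖y_k − y_{k−1}‖² + γ·‖y_{k+1} − y_k‖², where δ = (α/(2τ))(1 − 1/α)² and γ = (1/α)(1/(2τ) − M(2−α)/2). Consequently, if in addition τ < α/M, the quantity E_k = F(y_k) + δ‖y_k − y_{k−1}‖² is non-increasing in k. -/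

import Mathlib

open RealInnerProductSpace

variable {E : Type*} [NormedAddCommGroup E] [InnerProductSpace ℝ E] [CompleteSpace E]

-- chain rule along a line
lemma line_hasDerivAt {f : E → ℝ} {g : E} {a d : E} (t : ℝ)
    (hg : HasGradientAt f g (a + t • d)) :
    HasDerivAt (fun s : ℝ => f (a + s • d)) ⟪g, d⟫ t := by
  have hc : HasDerivAt (fun s : ℝ => a + s • d) d t := by
    simpa using ((hasDerivAt_id t).smul_const d).const_add a
  have hfd := (hasGradientAt_iff_hasFDerivAt.1 hg)
  have := hfd.comp_hasDerivAt t hc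
  simpa [InnerProductSpace.toDual_apply_apply, Function.comp_def] using this

lemma grad_convex_ineq {f : E → ℝ} (hconv : ConvexOn ℝ Set.univ f) {g q : E}
    (hg : HasGradientAt f g q) (yy : E) : f q + ⟪g, yy - q⟫ ≤ f yy := by
  set d := yy - q with hd
  have h0 : HasDerivAt (fun s : ℝ => f (q + s • d)) ⟪g, d⟫ 0 := by
    apply line_hasDerivAt; simpa using hg
  have hslope := hasDerivAt_iff_tendsto_slope.1 h0
  have hslope' : Filter.Tendsto (slope (fun s : ℝ => f (q + s • d)) 0)
      (nhdsWithin 0 (Set.Ioi 0)) (nhds ⟪g, d⟫) :=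
    hslope.mono_left (nhdsWithin_mono _ (fun t ht => by
      simp only [Set.mem_compl_iff, Set.mem_singleton_iff]
      exact ne_of_gt ht))
  have hev : ∀ᶠ t in nhdsWithin (0:ℝ) (Set.Ioi 0),
      slope (fun s : ℝ => f (q + s • d)) 0 t ≤ f yy - f q := by
    filter_upwards [Ioc_mem_nhdsGT_of_mem (Set.mem_Ico.2 ⟨le_refl 0, zero_lt_one⟩)] with t ht
    obtain ⟨ht0, ht1⟩ := ht
    have hcomb := hconv.2 (Set.mem_univ q) (Set.mem_univ yy)
      (by linarith : (0:ℝ) ≤ 1 - t) ht0.le (by ring)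
    have heq : q + t • d = (1 - t) • q + t • yy := by
      rw [hd]; module
    have hfle : f (q + t • d) ≤ (1 - t) * f q + t * f yy := by
      rw [heq]; simpa [smul_eq_mul] using hcomb
    rw [slope_def_field]
    simp only [zero_smul, add_zero, sub_zero]
    rw [div_le_iff₀ ht0]
    nlinarith
  have := le_of_tendsto hslope' hev
  linarith [this]

lemma descent_lemma {f : E → ℝ} {f' : E → E} {L : ℝ}
    (hf : ∀ x, HasGradientAt f (f' x) x)
    (hlip : ∀ u v, ‖f' u - f' v‖ ≤ L * ‖u - v‖) (a b : E) :
    f b ≤ f a + ⟪f' a, b - a⟫ + L / 2 * ‖b - a‖ ^ 2 := by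
  set d := b - a with hd
  set h : ℝ → ℝ := fun t => f (a + t • d) - t * ⟪f' a, d⟫ - L * ‖d‖ ^ 2 * t ^ 2 / 2 with hh
  have hderiv : ∀ t : ℝ, HasDerivAt h
      (⟪f' (a + t • d), d⟫ - ⟪f' a, d⟫ - L * ‖d‖ ^ 2 * t) t := by
    intro t
    have h1 : HasDerivAt (fun s : ℝ => f (a + s • d)) ⟪f' (a + t • d), d⟫ t :=
      line_hasDerivAt t (hf _)
    have h2 : HasDerivAt (fun s : ℝ => s * ⟪f' a, d⟫) ⟪f' a, d⟫ t := by
      simpa using (hasDerivAt_id t).mul_const ⟪f' a, d⟫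
    have h3 : HasDerivAt (fun s : ℝ => L * ‖d‖ ^ 2 * s ^ 2 / 2) (L * ‖d‖ ^ 2 * t) t := by
      have := ((hasDerivAt_pow 2 t).const_mul (L * ‖d‖ ^ 2)).div_const 2
      refine this.congr_deriv ?_
      ring
    exact (h1.sub h2).sub h3
  have hanti : AntitoneOn h (Set.Icc 0 1) := by
    apply antitoneOn_of_deriv_nonpos (convex_Icc 0 1)
    · exact (fun t _ => ((hderiv t).continuousAt).continuousWithinAt)
    · intro t _
      exact ((hderiv t).differentiableAt).differentiableWithinAt
    · intro t ht
      rw [interior_Icc] at ht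
      rw [(hderiv t).deriv]
      have hb : ⟪f' (a + t • d) - f' a, d⟫ ≤ L * ‖d‖ ^ 2 * t := by
        calc ⟪f' (a + t • d) - f' a, d⟫ ≤ ‖f' (a + t • d) - f' a‖ * ‖d‖ :=
              real_inner_le_norm _ _
          _ ≤ (L * ‖a + t • d - a‖) * ‖d‖ := by
              apply mul_le_mul_of_nonneg_right (hlip _ _) (norm_nonneg _)
          _ = L * ‖d‖ ^ 2 * t := by
              have : a + t • d - a = t • d := by abel
              rw [this, norm_smul, Real.norm_eq_abs, abs_of_pos ht.1]; ring
      rw [inner_sub_left] at hb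
      linarith
  have := hanti (Set.mem_Icc.2 ⟨le_refl 0, zero_le_one⟩)
    (Set.mem_Icc.2 ⟨zero_le_one, le_refl 1⟩) zero_le_one
  simp only [hh, zero_smul, add_zero, one_smul, zero_pow, one_pow] at this
  have hab : a + d = b := by rw [hd]; abel
  rw [hab] at this
  nlinarith [this]

lemma norm_combo_sq (a b : E) (t : ℝ) :
    ‖(1 - t) • a + t • b‖ ^ 2 =
      (1 - t) * ‖a‖ ^ 2 + t * ‖b‖ ^ 2 - t * (1 - t) * ‖a - b‖ ^ 2 := by
  have h1 : ‖(1 - t) • a + t • b‖ ^ 2 =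
      ‖(1 - t) • a‖ ^ 2 + 2 * ⟪(1 - t) • a, t • b⟫ + ‖t • b‖ ^ 2 := by
    rw [← norm_add_sq_real]
  have h2 : ‖a - b‖ ^ 2 = ‖a‖ ^ 2 - 2 * ⟪a, b⟫ + ‖b‖ ^ 2 := by
    rw [← norm_sub_sq_real]
  rw [h1, h2, real_inner_smul_left, real_inner_smul_right, norm_smul, norm_smul,
    mul_pow, mul_pow, Real.norm_eq_abs, Real.norm_eq_abs, sq_abs, sq_abs]
  ring

lemma norm_sub_shift_sq (u X g : E) (τ : ℝ) :
    ‖u - (X - τ • g)‖ ^ 2 = ‖u - X‖ ^ 2 + 2 * τ * ⟪g, u - X⟫ + τ ^ 2 * ‖g‖ ^ 2 := by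
  have h : u - (X - τ • g) = (u - X) + τ • g := by abel
  have h2 := norm_add_sq_real (u - X) (τ • g)
  rw [real_inner_smul_right, norm_smul, Real.norm_eq_abs] at h2
  rw [h, h2, real_inner_comm, mul_pow, sq_abs]
  ring

set_option maxHeartbeats 1000000 in
lemma prox_strong_min {φ : E → ℝ} {M τ : ℝ} (hτ : 0 < τ)
    (hφ : ConvexOn ℝ Set.univ (fun x => φ x + M / 2 * ‖x‖ ^ 2))
    {p z : E} (hp : ∀ u, φ p + 1 / (2 * τ) * ‖p - z‖ ^ 2 ≤ φ u + 1 / (2 * τ) * ‖u - z‖ ^ 2)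
    (u : E) :
    φ p + 1 / (2 * τ) * ‖p - z‖ ^ 2 + (1 / τ - M) / 2 * ‖u - p‖ ^ 2 ≤
      φ u + 1 / (2 * τ) * ‖u - z‖ ^ 2 := by
  have key : ∀ t : ℝ, t ∈ Set.Ioc (0:ℝ) 1 →
      φ p + 1 / (2 * τ) * ‖p - z‖ ^ 2 + (1 / τ - M) / 2 * (1 - t) * ‖u - p‖ ^ 2 ≤
        φ u + 1 / (2 * τ) * ‖u - z‖ ^ 2 := by
    intro t ht
    obtain ⟨ht0, ht1⟩ := ht
    obtain ⟨v, hv⟩ : ∃ v : E, v = (1 - t) • p + t • u := ⟨_, rfl⟩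
    have hψ := hφ.2 (Set.mem_univ p) (Set.mem_univ u) (by linarith : (0:ℝ) ≤ 1 - t) ht0.le
      (by ring)
    simp only [smul_eq_mul] at hψ
    rw [← hv] at hψ
    have hn1 : ‖v‖ ^ 2 = (1 - t) * ‖p‖ ^ 2 + t * ‖u‖ ^ 2 - t * (1 - t) * ‖p - u‖ ^ 2 := by
      rw [hv]; exact norm_combo_sq p u t
    have hvz : v - z = (1 - t) • (p - z) + t • (u - z) := by rw [hv]; module
    have hn2 : ‖v - z‖ ^ 2 = (1 - t) * ‖p - z‖ ^ 2 + t * ‖u - z‖ ^ 2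
        - t * (1 - t) * ‖p - u‖ ^ 2 := by
      rw [hvz, norm_combo_sq]
      have : p - z - (u - z) = p - u := by abel
      rw [this]
    have hmin := hp v
    have hpu : ‖u - p‖ ^ 2 = ‖p - u‖ ^ 2 := by rw [norm_sub_rev]
    have hτ' : (0:ℝ) < 2 * τ := by linarith
    have hdiv : 1 / (2 * τ) * (t * (1 - t) * ‖p - u‖ ^ 2)
        = t * (1 - t) / (2 * τ) * ‖p - u‖ ^ 2 := by ring
    -- combine: G p ≤ G v ≤ (1-t) G p + t G u - (1/τ - M)/2 * t(1-t)‖p-u‖²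
    have hGv : φ v + 1 / (2 * τ) * ‖v - z‖ ^ 2 ≤
        (1 - t) * (φ p + 1 / (2 * τ) * ‖p - z‖ ^ 2) +
        t * (φ u + 1 / (2 * τ) * ‖u - z‖ ^ 2) -
        (1 / τ - M) / 2 * (t * (1 - t)) * ‖p - u‖ ^ 2 := by
      have hn1' : M / 2 * ‖v‖ ^ 2 =
          M / 2 * ((1 - t) * ‖p‖ ^ 2 + t * ‖u‖ ^ 2 - t * (1 - t) * ‖p - u‖ ^ 2) := by
        rw [hn1]
      have hM2 : φ v ≤ (1 - t) * φ p + t * φ u + M / 2 * (t * (1 - t)) * ‖p - u‖ ^ 2 := by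
        nlinarith [hψ, hn1']
      have hfrac : 1 / (2 * τ) * ‖v - z‖ ^ 2 =
          (1 - t) * (1 / (2 * τ) * ‖p - z‖ ^ 2) + t * (1 / (2 * τ) * ‖u - z‖ ^ 2)
          - 1 / (2 * τ) * (t * (1 - t)) * ‖p - u‖ ^ 2 := by
        rw [hn2]; ring
      have h12 : (1 / τ - M) / 2 = 1 / (2 * τ) - M / 2 := by
        field_simp
      rw [h12]
      have hfrac' : 1 / (2 * τ) * (t * (1 - t)) * ‖p - u‖ ^ 2 =
          1 / (2 * τ) * (t * (1 - t) * ‖p - u‖ ^ 2) := by ring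
      nlinarith [hM2, hfrac]
    have hstep : t * ((1 / τ - M) / 2 * (1 - t) * ‖p - u‖ ^ 2) ≤
        t * (φ u + 1 / (2 * τ) * ‖u - z‖ ^ 2 - (φ p + 1 / (2 * τ) * ‖p - z‖ ^ 2)) := by
      linarith [hmin, hGv]
    have hcancel := le_of_mul_le_mul_left hstep ht0
    rw [hpu]
    linarith [hcancel]
  have hlim : Filter.Tendsto
      (fun t : ℝ => φ p + 1 / (2 * τ) * ‖p - z‖ ^ 2 +
        (1 / τ - M) / 2 * (1 - t) * ‖u - p‖ ^ 2)
      (nhdsWithin 0 (Set.Ioi 0))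
      (nhds (φ p + 1 / (2 * τ) * ‖p - z‖ ^ 2 + (1 / τ - M) / 2 * (1 - 0) * ‖u - p‖ ^ 2)) := by
    apply Filter.Tendsto.mono_left _ nhdsWithin_le_nhds
    have hc : Continuous (fun t : ℝ => φ p + 1 / (2 * τ) * ‖p - z‖ ^ 2 +
        (1 / τ - M) / 2 * (1 - t) * ‖u - p‖ ^ 2) :=
      continuous_const.add ((continuous_const.mul
        (continuous_const.sub continuous_id)).mul continuous_const)
    exact hc.tendsto 0
  have hev : ∀ᶠ t in nhdsWithin (0:ℝ) (Set.Ioi 0),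
      φ p + 1 / (2 * τ) * ‖p - z‖ ^ 2 + (1 / τ - M) / 2 * (1 - t) * ‖u - p‖ ^ 2 ≤
        φ u + 1 / (2 * τ) * ‖u - z‖ ^ 2 := by
    filter_upwards [Ioc_mem_nhdsGT_of_mem (Set.mem_Ico.2 ⟨le_refl 0, zero_lt_one⟩)] with t ht
    exact key t ht
  have := le_of_tendsto hlim hev
  linarith [this]

lemma weak_convex_combo {φ : E → ℝ} {M : ℝ}
    (hφ : ConvexOn ℝ Set.univ (fun x => φ x + M / 2 * ‖x‖ ^ 2))
    (a b : E) {t : ℝ} (ht0 : 0 ≤ t) (ht1 : t ≤ 1) :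
    φ ((1 - t) • a + t • b) ≤
      (1 - t) * φ a + t * φ b + M / 2 * (t * (1 - t)) * ‖a - b‖ ^ 2 := by
  have hψ := hφ.2 (Set.mem_univ a) (Set.mem_univ b) (by linarith : (0:ℝ) ≤ 1 - t) ht0
    (by ring)
  simp only [smul_eq_mul] at hψ
  have hn := norm_combo_sq a b t
  have hn' : M / 2 * ‖(1 - t) • a + t • b‖ ^ 2 =
      M / 2 * ((1 - t) * ‖a‖ ^ 2 + t * ‖b‖ ^ 2 - t * (1 - t) * ‖a - b‖ ^ 2) := by
    rw [hn]
  nlinarith [hψ, hn']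

set_option maxHeartbeats 1000000 in
/-- Lyapunov decrease for αPGD: with `f` convex, differentiable, `∇f`
`L_f`-Lipschitz, `φ` `M`-weakly convex (`M ≥ 0`), `α ∈ (0,1)`, `τ > 0` with `τ·α·L_f < 1`,
`F = f + φ`, and αPGD iterates, one has for all `k ≥ 1`
`F(y_k) − F(y_{k+1}) ≥ −δ‖y_k − y_{k−1}‖² + γ‖y_{k+1} − y_k‖²` where
`δ = (α/(2τ))(1 − 1/α)²` and `γ = (1/α)(1/(2τ) − M(2−α)/2)`. Consequently, if in
addition `τ < α/M` (stated as `τ·M < α`), the quantity `E_k = F(y_k) + δ‖y_k − y_{k−1}‖²`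
is non-increasing in `k`. -/
theorem alphaPGD_lyapunov_decrease {n : ℕ}
    (f : EuclideanSpace ℝ (Fin n) → ℝ)
    (f' : EuclideanSpace ℝ (Fin n) → EuclideanSpace ℝ (Fin n))
    (φ : EuclideanSpace ℝ (Fin n) → ℝ) (M L_f α τ : ℝ)
    (hf : ∀ x, HasGradientAt f (f' x) x)
    (hfconv : ConvexOn ℝ Set.univ f)
    (hlip : ∀ u v, ‖f' u - f' v‖ ≤ L_f * ‖u - v‖)
    (hM : 0 ≤ M)
    (hφ : ConvexOn ℝ Set.univ (fun x => φ x + M / 2 * ‖x‖ ^ 2))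
    (hα : α ∈ Set.Ioo (0 : ℝ) 1) (hτ : 0 < τ) (hτL : τ * α * L_f < 1)
    (F : EuclideanSpace ℝ (Fin n) → ℝ) (hF : ∀ x, F x = f x + φ x)
    (q x y : ℕ → EuclideanSpace ℝ (Fin n))
    (hq : ∀ k, q (k + 1) = (1 - α) • y k + α • x k)
    (hx : ∀ k, ∀ u,
      φ (x (k + 1)) + 1 / (2 * τ) * ‖x (k + 1) - (x k - τ • f' (q (k + 1)))‖ ^ 2 ≤
        φ u + 1 / (2 * τ) * ‖u - (x k - τ • f' (q (k + 1)))‖ ^ 2)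
    (hy : ∀ k, y (k + 1) = (1 - α) • y k + α • x (k + 1))
    (δ γ : ℝ)
    (hδ : δ = α / (2 * τ) * (1 - 1 / α) ^ 2)
    (hγ : γ = 1 / α * (1 / (2 * τ) - M * (2 - α) / 2)) :
    (∀ k : ℕ, 1 ≤ k →
      F (y k) - F (y (k + 1)) ≥
        -δ * ‖y k - y (k - 1)‖ ^ 2 + γ * ‖y (k + 1) - y k‖ ^ 2) ∧
    (τ * M < α → ∀ k : ℕ, 1 ≤ k →
      F (y (k + 1)) + δ * ‖y (k + 1) - y k‖ ^ 2 ≤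
        F (y k) + δ * ‖y k - y (k - 1)‖ ^ 2) := by
  obtain ⟨hα0, hα1⟩ := hα
  have hαne : α ≠ 0 := ne_of_gt hα0
  have hτne : τ ≠ 0 := ne_of_gt hτ
  have main : ∀ k : ℕ, 1 ≤ k →
      F (y k) - F (y (k + 1)) ≥
        -δ * ‖y k - y (k - 1)‖ ^ 2 + γ * ‖y (k + 1) - y k‖ ^ 2 := by
    intro k hk
    obtain ⟨m, rfl⟩ : ∃ m, k = m + 1 := ⟨k - 1, (Nat.succ_pred_eq_of_pos hk).symm⟩
    simp only [Nat.add_sub_cancel]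
    -- descent lemma
    have hi := descent_lemma hf hlip (q (m+1+1)) (y (m+1+1))
    have hvec1 : y (m+1+1) - q (m+1+1) = α • (x (m+1+1) - x (m+1)) := by
      rw [hy (m+1), hq (m+1)]; module
    rw [hvec1, real_inner_smul_right, norm_smul, Real.norm_eq_abs, mul_pow, sq_abs] at hi
    -- convexity of f
    have hii := grad_convex_ineq hfconv (hf (q (m+1+1))) (y (m+1))
    have hvec2 : y (m+1) - q (m+1+1) = α • (y (m+1) - x (m+1)) := by
      rw [hq (m+1)]; module
    rw [hvec2, real_inner_smul_right] at hii
    -- prox strong min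
    have hiii := prox_strong_min hτ hφ (hx (m+1)) (y (m+1))
    rw [norm_sub_shift_sq (x (m+1+1)) (x (m+1)) (f' (q (m+1+1))) τ,
      norm_sub_shift_sq (y (m+1)) (x (m+1)) (f' (q (m+1+1))) τ] at hiii
    have e1 : 1 / (2*τ) * (‖x (m+1+1) - x (m+1)‖^2
          + 2*τ*⟪f' (q (m+1+1)), x (m+1+1) - x (m+1)⟫ + τ^2*‖f' (q (m+1+1))‖^2)
        = 1/(2*τ) * ‖x (m+1+1) - x (m+1)‖^2
          + ⟪f' (q (m+1+1)), x (m+1+1) - x (m+1)⟫ + τ/2*‖f' (q (m+1+1))‖^2 := by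
      field_simp
    have e2 : 1 / (2*τ) * (‖y (m+1) - x (m+1)‖^2
          + 2*τ*⟪f' (q (m+1+1)), y (m+1) - x (m+1)⟫ + τ^2*‖f' (q (m+1+1))‖^2)
        = 1/(2*τ) * ‖y (m+1) - x (m+1)‖^2
          + ⟪f' (q (m+1+1)), y (m+1) - x (m+1)⟫ + τ/2*‖f' (q (m+1+1))‖^2 := by
      field_simp
    have hiiic : φ (x (m+1+1)) + ⟪f' (q (m+1+1)), x (m+1+1) - x (m+1)⟫
          + 1/(2*τ) * ‖x (m+1+1) - x (m+1)‖^2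
          + (1/τ - M)/2 * ‖y (m+1) - x (m+1+1)‖^2
        ≤ φ (y (m+1)) + ⟪f' (q (m+1+1)), y (m+1) - x (m+1)⟫
          + 1/(2*τ) * ‖y (m+1) - x (m+1)‖^2 := by
      linarith [hiii, e1, e2]
    have hiii' := mul_le_mul_of_nonneg_left hiiic (le_of_lt hα0)
    -- weak convexity combo
    have hiv : φ (y (m+1+1)) ≤ (1-α) * φ (y (m+1)) + α * φ (x (m+1+1))
        + M/2 * (α*(1-α)) * ‖y (m+1) - x (m+1+1)‖^2 := by
      have h := weak_convex_combo hφ (y (m+1)) (x (m+1+1)) (le_of_lt hα0) (le_of_lt hα1)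
      rw [← hy (m+1)] at h
      exact h
    -- norm relations
    have hv3 : y (m+1) - x (m+1) = (1-α) • (y m - x (m+1)) := by
      rw [hy m]; module
    have hn3 : ‖y (m+1) - x (m+1)‖^2 = (1-α)^2 * ‖x (m+1) - y m‖^2 := by
      rw [hv3, norm_smul, Real.norm_eq_abs, mul_pow, sq_abs, norm_sub_rev]
    have hv4 : y (m+1) - y m = α • (x (m+1) - y m) := by
      rw [hy m]; module
    have hd1 : ‖y (m+1) - y m‖^2 = α^2 * ‖x (m+1) - y m‖^2 := by
      rw [hv4, norm_smul, Real.norm_eq_abs, mul_pow, sq_abs]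
    have hv5 : y (m+1+1) - y (m+1) = α • (x (m+1+1) - y (m+1)) := by
      rw [hy (m+1)]; module
    have hd2 : ‖y (m+1+1) - y (m+1)‖^2 = α^2 * ‖y (m+1) - x (m+1+1)‖^2 := by
      rw [hv5, norm_smul, Real.norm_eq_abs, mul_pow, sq_abs, norm_sub_rev]
    have key1 : δ * ‖y (m+1) - y m‖^2 = α * (1/(2*τ) * ‖y (m+1) - x (m+1)‖^2) := by
      rw [hδ, hd1, hn3]
      field_simp
      ring
    have key2 : γ * ‖y (m+1+1) - y (m+1)‖^2 =
        α * ((1/τ - M)/2 * ‖y (m+1) - x (m+1+1)‖^2)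
          - M/2 * (α*(1-α)) * ‖y (m+1) - x (m+1+1)‖^2 := by
      rw [hγ, hd2]
      field_simp
      ring
    have hcoef : 0 ≤ (α * (1/(2*τ)) - L_f/2 * α^2) * ‖x (m+1+1) - x (m+1)‖^2 := by
      apply mul_nonneg _ (sq_nonneg _)
      have h1 : (0:ℝ) ≤ 1 - τ * α * L_f := by linarith
      have h2 : α * (1/(2*τ)) - L_f/2 * α^2 = α * (1 - τ*α*L_f) / (2*τ) := by
        field_simp
      rw [h2]
      exact div_nonneg (mul_nonneg (le_of_lt hα0) h1) (by linarith)
    rw [ge_iff_le, hF (y (m+1)), hF (y (m+1+1))]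
    linarith [hi, hii, hiii', hiv, key1, key2, hcoef]
  refine ⟨main, ?_⟩
  intro hτM k hk
  have h1 := main k hk
  have hdiff : γ - δ = (2-α)*(α - τ*M)/(2*τ*α) := by
    rw [hδ, hγ]
    field_simp
    ring
  have hge : 0 ≤ γ - δ := by
    rw [hdiff]
    apply div_nonneg
    · apply mul_nonneg (by linarith) (by linarith)
    · positivity
  have hprod : 0 ≤ (γ - δ) * ‖y (k+1) - y k‖^2 := mul_nonneg hge (sq_nonneg _)
  linarith [h1, hprod]
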